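/- arXiv:2304.09598 — 3 statements merged into one kernel-verified Lean document; each statement's English description precedes it below -/
import Mathlib

section
/- If α and β are multisegments with α ≤ β in the partial order generated by union-intersection and conjunction moves, then the length L of the longest segment in α is at most the length of the longest segment in β. -/
/-- A segment `[b, e]` is the set of consecutive integers `{b, b+1, ..., e}`,
recorded as the pair `(b, e)` of its base `b` and end `e`. -/
abbrev Segment : Type := ℤ × ℤ

/-- A multisegment is a finite multiset of segments. -/
abbrev Multisegment : Type := Multiset Segment

/-- The length `e - b + 1` of the segment `[b, e]`. -/
def Segment.len (Δ : Segment) : ℤ := Δ.2 - Δ.1 + 1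

/-- `[b₁,e₁]` precedes `[b₂,e₂]` iff `b₁ < b₂`, `e₁ < e₂` and `b₂ ≤ e₁ + 1`. -/
def Precedes (Δ₁ Δ₂ : Segment) : Prop :=
  Δ₁.1 < Δ₂.1 ∧ Δ₁.2 < Δ₂.2 ∧ Δ₂.1 ≤ Δ₁.2 + 1

instance (Δ₁ Δ₂ : Segment) : Decidable (Precedes Δ₁ Δ₂) := by
  unfold Precedes; infer_instance

/-- Every member of a multisegment is a genuine (nonempty) segment. -/
def IsMultisegment (α : Multisegment) : Prop := ∀ Δ ∈ α, Δ.1 ≤ Δ.2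

/-- The rank `r_{i,j}`: the number of segments `[k,l]` of `α` with `k ≤ i` and `j ≤ l`. -/
def rank (α : Multisegment) (i j : ℤ) : ℕ :=
  (α.filter fun Δ => Δ.1 ≤ i ∧ j ≤ Δ.2).card

/-- `n_α`: the number of segments of `α`, counted with multiplicity. -/
def nSeg (α : Multisegment) : ℕ := Multiset.card α

instance : Std.Commutative (fun a b : ℤ => max a b) := ⟨max_comm⟩
instance : Std.Associative (fun a b : ℤ => max a b) := ⟨max_assoc⟩

/-- `L_α`: the length of the longest segment of `α` (0 for the empty multisegment). -/
def Lmax (α : Multisegment) : ℤ := (α.map Segment.len).fold (fun a b => max a b) 0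

/-- The support `∪_{Δ ∈ α} Δ` of a multisegment, as a finite set of integers. -/
noncomputable def supp (α : Multisegment) : Finset ℤ := α.toFinset.biUnion fun Δ => Finset.Icc Δ.1 Δ.2

/-- `S_α`: the number of integers in `∪_{Δ ∈ α} Δ`. -/
noncomputable def Ssize (α : Multisegment) : ℕ := (supp α).card

/-- `c_α`: the number of interval components of `∪_{Δ ∈ α} Δ`
(counted via their left endpoints). -/
noncomputable def comp (α : Multisegment) : ℕ :=
  ((supp α).filter fun x => x - 1 ∉ supp α).card

/-! ### The Mœglin–Waldspurger algorithm -/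

/-- Remove the end value from a segment, dropping it if it becomes empty. -/
def removeEnd (Δ : Segment) : Option Segment :=
  if Δ.1 ≤ Δ.2 - 1 then some (Δ.1, Δ.2 - 1) else none

/-- Among the segments of `l` with end value `m`, pick a shortest one (if any). -/
def pickShortest (m : ℤ) (l : List Segment) : Option Segment :=
  (l.filter fun Δ => Δ.2 == m).foldl (fun acc Δ =>
    match acc with
    | none => some Δ
    | some Δ' => if Δ'.1 < Δ.1 then some Δ else some Δ') none

/-- Starting from a current segment `Δ`, greedily build the Mœglin–Waldspurger chain:
at each step choose a shortest segment preceding the current one whose end value is one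
less.  Returns the chosen chain together with the unchosen segments. -/
def pickChain : ℕ → Segment → List Segment → List Segment × List Segment
  | 0, Δ, rest => ([Δ], rest)
  | n + 1, Δ, rest =>
    match pickShortest (Δ.2 - 1) (rest.filter fun Δ' => decide (Precedes Δ' Δ)) with
    | none => ([Δ], rest)
    | some Δ' =>
      let p := pickChain n Δ' (rest.erase Δ')
      (Δ :: p.1, p.2)

/-- One iteration of the Mœglin–Waldspurger algorithm: returns the produced dual
segment `[m, e]` together with the multisegment `α'` left after removing the chosen
end values. -/
def mwIter (l : List Segment) : Option (Segment × List Segment) :=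
  match (l.map fun Δ => Δ.2).max? with
  | none => none
  | some e =>
    match pickShortest e l with
    | none => none
    | some Δe =>
      let p := pickChain l.length Δe (l.erase Δe)
      some ((Δe.2 - ((p.1.length : ℤ) - 1), e), p.2 ++ p.1.filterMap removeEnd)

/-- The total number of integers (with multiplicity) in a list of segments. -/
def totalSize (l : List Segment) : ℕ := (l.map fun Δ => (Δ.2 - Δ.1 + 1).toNat).sum

/-- Fueled iteration of the Mœglin–Waldspurger algorithm. -/
def mwAux : ℕ → List Segment → List Segment
  | 0, _ => []
  | n + 1, l =>
    match mwIter l with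
    | none => []
    | some (Δ', l') => Δ' :: mwAux n l'

/-- The Mœglin–Waldspurger dual `α̃` of a multisegment `α`. -/
noncomputable def dual (α : Multisegment) : Multisegment :=
  (mwAux (totalSize α.toList) α.toList : List Segment)

/-! ### The partial order on multisegments -/

/-- An elementary move on multisegments: either the union–intersection move
(replace distinct overlapping `Δ₁, Δ₂` by `Δ₁ ∩ Δ₂` and `Δ₁ ∪ Δ₂`) or the
conjunction move (replace two disjoint adjacent segments by their union). -/
inductive MoveStep : Multisegment → Multisegment → Prop
  | unionInter (α : Multisegment) (Δ₁ Δ₂ : Segment)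
      (hmeet : max Δ₁.1 Δ₂.1 ≤ min Δ₁.2 Δ₂.2) (hne : Δ₁ ≠ Δ₂) :
      MoveStep (Δ₁ ::ₘ Δ₂ ::ₘ α)
        ((max Δ₁.1 Δ₂.1, min Δ₁.2 Δ₂.2) ::ₘ (min Δ₁.1 Δ₂.1, max Δ₁.2 Δ₂.2) ::ₘ α)
  | conj (α : Multisegment) (Δ₁ Δ₂ : Segment) (h : Δ₂.1 = Δ₁.2 + 1) :
      MoveStep (Δ₁ ::ₘ Δ₂ ::ₘ α) ((Δ₁.1, Δ₂.2) ::ₘ α)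

/-- The partial order `α ≤ β` on multisegments, generated by the elementary moves. -/
def mle (α β : Multisegment) : Prop := Relation.ReflTransGen MoveStep α β

/-- A ladder multisegment: the segments can be listed with strictly increasing
bases and strictly increasing ends. -/
def IsLadder (α : Multisegment) : Prop :=
  ∃ l : List Segment, (l : Multiset Segment) = α ∧
    l.Chain' fun Δ₁ Δ₂ => Δ₁.1 < Δ₂.1 ∧ Δ₁.2 < Δ₂.2

/-- `C_α`: the maximal number of (nonempty) components in a decomposition
`α = ⊔ᵢ αᵢ` satisfying `α̃ = ⊔ᵢ α̃ᵢ`. -/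
noncomputable def Cmax (α : Multisegment) : ℕ :=
  sSup {n | ∃ parts : Multiset Multisegment, Multiset.card parts = n ∧
    (∀ γ ∈ parts, γ ≠ 0) ∧ parts.sum = α ∧ (parts.map dual).sum = dual α}

/-- The simple multisegment `{[b,e], [b+1,e+1], ..., [b+n-1,e+n-1]}`. -/
def simpleMS (b e : ℤ) (n : ℕ) : Multisegment :=
  (Multiset.range n).map fun i => (b + i, e + i)

/-- The symmetric simple multisegment `{[-e,b], [-e+1,b+1], ..., [-b,e]}`. -/
def symmSimple (b e : ℤ) : Multisegment :=
  (Multiset.range (e - b + 1).toNat).map fun i => (-e + i, b + i)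

lemma Lmax_cons (Δ : Segment) (α : Multisegment) :
    Lmax (Δ ::ₘ α) = max Δ.len (Lmax α) := by
  simp [Lmax, Multiset.fold_cons_left, max_assoc, max_comm]

lemma step_key {α β : Multisegment} (h : MoveStep α β) (hα : IsMultisegment α) :
    IsMultisegment β ∧ Lmax α ≤ Lmax β := by
  induction h with
  | unionInter γ Δ₁ Δ₂ hmeet hne =>
    have h1 : Δ₁.1 ≤ Δ₁.2 := hα Δ₁ (by simp)
    have h2 : Δ₂.1 ≤ Δ₂.2 := hα Δ₂ (by simp)
    constructor
    · intro Δ hΔ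
      simp only [Multiset.mem_cons] at hΔ
      rcases hΔ with rfl | rfl | hΔ
      · exact hmeet
      · simp only []; omega
      · exact hα Δ (by simp [hΔ])
    · simp only [Lmax_cons, Segment.len]
      have := le_max_left (max Δ₁.1 Δ₂.1) 0
      rcases le_total Δ₁.1 Δ₂.1 with hb | hb <;>
        rcases le_total Δ₁.2 Δ₂.2 with he | he <;>
        simp [max_def, min_def, hb, he, le_max_iff, max_le_iff] <;> omega
  | conj γ Δ₁ Δ₂ hadj =>
    have h1 : Δ₁.1 ≤ Δ₁.2 := hα Δ₁ (by simp)
    have h2 : Δ₂.1 ≤ Δ₂.2 := hα Δ₂ (by simp)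
    constructor
    · intro Δ hΔ
      simp only [Multiset.mem_cons] at hΔ
      rcases hΔ with rfl | hΔ
      · simp only []; omega
      · exact hα Δ (by simp [hΔ])
    · simp only [Lmax_cons, Segment.len]
      simp only [le_max_iff, max_le_iff]
      omega

/-- if `α ≤ β` then the longest segment of `α` is no longer than the
longest segment of `β`. -/
theorem stmt2 (α β : Multisegment) (hα : IsMultisegment α) (h : mle α β) :
    Lmax α ≤ Lmax β := by
  induction h with
  | refl => exact le_refl _
  | tail _ hstep ih =>
    rename_i γ δ _
    have : IsMultisegment γ ∧ Lmax α ≤ Lmax γ := by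
      clear hstep ih
      rename_i hmle
      induction hmle with
      | refl => exact ⟨hα, le_refl _⟩
      | tail _ hstep ih =>
        obtain ⟨hm, hl⟩ := ih
        obtain ⟨hm', hl'⟩ := step_key hstep hm
        exact ⟨hm', hl.trans hl'⟩
    obtain ⟨hm, hl⟩ := this
    exact hl.trans (step_key hstep hm).2
end

section
/- For any multisegment α, the number of segments in the dual multisegment α̃ (computed by the Mœglin–Waldspurger algorithm) is at least the length L_α of the longest segment in α, and symmetrically n_α ≥ L_{α̃}. -/
/-! ### Auxiliary lemmas -/

private lemma perm_cons_erase' {l : List Segment} {a : Segment} (h : a ∈ l) :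
    l.Perm (a :: l.erase a) := by
  induction l with
  | nil => cases h
  | cons b t ih =>
    rw [List.erase_cons]
    by_cases hba : b = a
    · simp [hba]
    · rw [if_neg (by simpa using hba)]
      rcases List.mem_cons.mp h with h | h
      · exact absurd h.symm hba
      · exact ((ih h).cons b).trans (List.Perm.swap _ _ _)

private def pf (acc : Option Segment) (Δ : Segment) : Option Segment :=
  match acc with
  | none => some Δ
  | some Δ' => if Δ'.1 < Δ.1 then some Δ else some Δ'

private lemma pickShortest_eq (m : ℤ) (l : List Segment) :
    pickShortest m l = (l.filter fun Δ => Δ.2 == m).foldl pf none := rfl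

private lemma pf_foldl_mem : ∀ (L : List Segment) (acc : Option Segment) (Δ : Segment),
    L.foldl pf acc = some Δ → acc = some Δ ∨ Δ ∈ L := by
  intro L
  induction L with
  | nil => intro acc Δ h; exact Or.inl h
  | cons x t ih =>
    intro acc Δ h
    rcases ih (pf acc x) Δ h with h' | h'
    · cases acc with
      | none =>
        simp only [pf] at h'
        right; exact List.mem_cons.mpr (Or.inl (Option.some.inj h').symm)
      | some y =>
        simp only [pf] at h'
        split_ifs at h' with hy
        · right; exact List.mem_cons.mpr (Or.inl (Option.some.inj h').symm)
        · exact Or.inl h'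
    · right; exact List.mem_cons_of_mem _ h'

private lemma pf_foldl_some : ∀ (L : List Segment) (y : Segment),
    ∃ Δ, L.foldl pf (some y) = some Δ := by
  intro L
  induction L with
  | nil => intro y; exact ⟨y, rfl⟩
  | cons x t ih =>
    intro y
    show ∃ Δ, t.foldl pf (pf (some y) x) = some Δ
    simp only [pf]
    split_ifs
    · exact ih x
    · exact ih y

private lemma pickShortest_mem {m : ℤ} {l : List Segment} {Δ : Segment}
    (h : pickShortest m l = some Δ) : Δ ∈ l ∧ Δ.2 = m := by
  rw [pickShortest_eq] at h
  rcases pf_foldl_mem _ _ _ h with h' | h'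
  · cases h'
  · have := List.mem_filter.mp h'
    exact ⟨this.1, by simpa using this.2⟩

private lemma pickShortest_isSome {m : ℤ} {l : List Segment}
    (h : ∃ Δ ∈ l, Δ.2 = m) : ∃ Δ, pickShortest m l = some Δ := by
  obtain ⟨Δ₀, h₀, he₀⟩ := h
  have hf : Δ₀ ∈ l.filter fun Δ => Δ.2 == m :=
    List.mem_filter.mpr ⟨h₀, by simpa using he₀⟩
  rw [pickShortest_eq]
  rcases hx : l.filter fun Δ => Δ.2 == m with _ | ⟨x, t⟩
  · rw [hx] at hf; cases hf
  · rw [hx]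
    exact pf_foldl_some t x

private lemma pickChain_spec (n : ℕ) (Δ : Segment) (rest : List Segment) :
    (∃ t, (pickChain n Δ rest).1 = Δ :: t) ∧
    ((pickChain n Δ rest).1 ++ (pickChain n Δ rest).2).Perm (Δ :: rest) := by
  induction n generalizing Δ rest with
  | zero => exact ⟨⟨[], rfl⟩, by simp [pickChain]⟩
  | succ n ih =>
    rcases h : pickShortest (Δ.2 - 1) (rest.filter fun Δ' => decide (Precedes Δ' Δ))
        with _ | Δ'
    · simp [pickChain, h]
    · have hmem : Δ' ∈ rest := (List.mem_filter.mp (pickShortest_mem h).1).1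
      obtain ⟨_, hperm⟩ := ih Δ' (rest.erase Δ')
      have hred : pickChain (n+1) Δ rest
          = (Δ :: (pickChain n Δ' (rest.erase Δ')).1, (pickChain n Δ' (rest.erase Δ')).2) := by
        simp [pickChain, h]
      rw [hred]
      refine ⟨⟨(pickChain n Δ' (rest.erase Δ')).1, rfl⟩, ?_⟩
      exact List.Perm.trans (hperm.cons Δ) (((perm_cons_erase' hmem).symm).cons Δ)

private lemma mwIter_spec {l : List Segment} (hl : l ≠ []) :
    ∃ (c r : List Segment) (e : ℤ),
      mwIter l = some ((e - ((c.length : ℤ) - 1), e), r ++ c.filterMap removeEnd) ∧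
      (c ++ r).Perm l ∧ c ≠ [] := by
  obtain ⟨e, he⟩ : ∃ e, (l.map fun Δ => Δ.2).max? = some e := by
    rcases h : (l.map fun Δ => Δ.2).max? with _ | e
    · rw [List.max?_eq_none_iff, List.map_eq_nil_iff] at h
      exact absurd h hl
    · exact ⟨e, h⟩
  have hemem : e ∈ l.map fun Δ => Δ.2 := List.max?_mem he
  obtain ⟨Δ₀, hΔ₀l, hΔ₀e⟩ := List.mem_map.mp hemem
  obtain ⟨Δe, hpe⟩ := pickShortest_isSome ⟨Δ₀, hΔ₀l, hΔ₀e⟩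
  obtain ⟨hΔel, hΔee⟩ := pickShortest_mem hpe
  obtain ⟨t, hc⟩ := (pickChain_spec l.length Δe (l.erase Δe)).1
  have hperm := (pickChain_spec l.length Δe (l.erase Δe)).2
  refine ⟨(pickChain l.length Δe (l.erase Δe)).1,
          (pickChain l.length Δe (l.erase Δe)).2, e, ?_, ?_, ?_⟩
  · simp only [mwIter, he, hpe, hΔee]
  · exact hperm.trans (perm_cons_erase' hΔel).symm
  · simp [hc]

private lemma mem_filterMap_removeEnd {c : List Segment} {s : Segment}
    (h : s ∈ c.filterMap removeEnd) : s.1 ≤ s.2 := by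
  obtain ⟨Δ, _, hre⟩ := List.mem_filterMap.mp h
  by_cases h2 : Δ.1 ≤ Δ.2 - 1
  · rw [show removeEnd Δ = some (Δ.1, Δ.2 - 1) from by simp [removeEnd, h2]] at hre
    obtain rfl := Option.some.inj hre
    simpa using h2
  · rw [show removeEnd Δ = none from by simp [removeEnd, h2]] at hre
    cases hre

private lemma totalSize_filterMap {c : List Segment} (hc : ∀ Δ ∈ c, Δ.1 ≤ Δ.2) :
    totalSize (c.filterMap removeEnd) + c.length = totalSize c := by
  induction c with
  | nil => rfl
  | cons Δ t ih =>
    have h1 : Δ.1 ≤ Δ.2 := hc Δ (by simp)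
    have ih' := ih (fun Δ' h => hc Δ' (by simp [h]))
    by_cases h2 : Δ.1 ≤ Δ.2 - 1
    · have hre : removeEnd Δ = some (Δ.1, Δ.2 - 1) := by simp [removeEnd, h2]
      rw [List.filterMap_cons, hre]
      show totalSize ((Δ.1, Δ.2 - 1) :: List.filterMap removeEnd t) + (Δ :: t).length
          = totalSize (Δ :: t)
      simp only [totalSize, List.map_cons, List.sum_cons, List.length_cons] at ih' ⊢
      omega
    · have hre : removeEnd Δ = none := by simp [removeEnd, h2]
      rw [List.filterMap_cons, hre]
      show totalSize (List.filterMap removeEnd t) + (Δ :: t).length = totalSize (Δ :: t)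
      simp only [totalSize, List.map_cons, List.sum_cons, List.length_cons] at ih' ⊢
      omega

private lemma totalSize_append (a b : List Segment) :
    totalSize (a ++ b) = totalSize a + totalSize b := by
  simp [totalSize]

private lemma lenA : ∀ (fuel : ℕ) (l : List Segment), (∀ Δ ∈ l, Δ.1 ≤ Δ.2) →
    totalSize l ≤ fuel → ∀ Δ ∈ l, Segment.len Δ ≤ ((mwAux fuel l).length : ℤ) := by
  intro fuel
  induction fuel with
  | zero =>
    intro l hms hts Δ hΔ
    exfalso
    have h1 : (Δ.2 - Δ.1 + 1).toNat ≤ totalSize l :=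
      List.single_le_sum (fun _ _ => Nat.zero_le _) _ (List.mem_map_of_mem hΔ)
    have := hms Δ hΔ
    omega
  | succ n ih =>
    intro l hms hts Δ hΔ
    have hl : l ≠ [] := fun h => by simp [h] at hΔ
    obtain ⟨c, r, e, hiter, hperm, hcne⟩ := mwIter_spec hl
    have hmwaux : mwAux (n+1) l
        = (e - ((c.length : ℤ) - 1), e) :: mwAux n (r ++ c.filterMap removeEnd) := by
      simp [mwAux, hiter]
    have hsubc : ∀ Δ' ∈ c, Δ' ∈ l := fun Δ' h => hperm.subset (List.mem_append_left r h)
    have hsubr : ∀ Δ' ∈ r, Δ' ∈ l := fun Δ' h => hperm.subset (List.mem_append_right c h)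
    have hms' : ∀ Δ' ∈ r ++ c.filterMap removeEnd, Δ'.1 ≤ Δ'.2 := by
      intro Δ' h
      rcases List.mem_append.mp h with h | h
      · exact hms Δ' (hsubr Δ' h)
      · exact mem_filterMap_removeEnd h
    have hts' : totalSize (r ++ c.filterMap removeEnd) ≤ n := by
      have h1 : totalSize (c ++ r) = totalSize l := (hperm.map _).sum_eq
      have h2 := totalSize_filterMap (fun Δ' h => hms Δ' (hsubc Δ' h))
      have h3 := totalSize_append c r
      have h4 := totalSize_append r (c.filterMap removeEnd)
      have h5 : 1 ≤ c.length := List.length_pos_iff.mpr hcne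
      omega
    rw [hmwaux]
    have hN : (0:ℤ) ≤ ((mwAux n (r ++ c.filterMap removeEnd)).length : ℤ) :=
      Int.ofNat_nonneg _
    have hcast : ((((e - ((c.length : ℤ) - 1), e) :: mwAux n (r ++ c.filterMap removeEnd)).length : ℤ))
        = ((mwAux n (r ++ c.filterMap removeEnd)).length : ℤ) + 1 := by
      simp
    rw [hcast]
    rcases List.mem_append.mp (hperm.symm.subset hΔ) with hmem | hmem
    · by_cases hlen : Δ.1 ≤ Δ.2 - 1
      · have hmem' : (Δ.1, Δ.2 - 1) ∈ r ++ c.filterMap removeEnd :=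
          List.mem_append_right r
            (List.mem_filterMap.mpr ⟨Δ, hmem, by simp [removeEnd, hlen]⟩)
        have := ih _ hms' hts' _ hmem'
        simp only [Segment.len] at this ⊢
        omega
      · simp only [Segment.len]
        omega
    · have := ih _ hms' hts' Δ (List.mem_append_left _ hmem)
      omega

private lemma lenB : ∀ (fuel : ℕ) (l : List Segment),
    ∀ s ∈ mwAux fuel l, Segment.len s ≤ (l.length : ℤ) := by
  intro fuel
  induction fuel with
  | zero => intro l s hs; simp [mwAux] at hs
  | succ n ih =>
    intro l s hs
    by_cases hl : l = []
    · subst hl; simp [mwAux, mwIter] at hs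
    obtain ⟨c, r, e, hiter, hperm, hcne⟩ := mwIter_spec hl
    rw [show mwAux (n+1) l
        = (e - ((c.length : ℤ) - 1), e) :: mwAux n (r ++ c.filterMap removeEnd) by
      simp [mwAux, hiter]] at hs
    have hlen : c.length + r.length = l.length := by simpa using hperm.length_eq
    rcases List.mem_cons.mp hs with h | h
    · subst h
      simp only [Segment.len]
      have h5 : 1 ≤ c.length := List.length_pos_iff.mpr hcne
      have : (c.length : ℤ) ≤ (l.length : ℤ) := by exact_mod_cast Nat.le.intro hlen
      omega
    · have h1 := ih _ s h
      have h2 : (r ++ c.filterMap removeEnd).length ≤ l.length := by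
        have h3 := List.length_filterMap_le removeEnd c
        rw [List.length_append]
        omega
      calc Segment.len s ≤ ((r ++ c.filterMap removeEnd).length : ℤ) := h1
        _ ≤ (l.length : ℤ) := by exact_mod_cast h2

private lemma lmax_le {n : ℤ} (α : Multisegment) (h0 : 0 ≤ n)
    (h : ∀ Δ ∈ α, Segment.len Δ ≤ n) : Lmax α ≤ n := by
  unfold Lmax
  induction α using Multiset.induction with
  | empty => simpa
  | cons a s ih =>
    rw [Multiset.map_cons, Multiset.fold_cons_left]
    exact max_le (h a (Multiset.mem_cons_self a s))
      (ih fun Δ hΔ => h Δ (Multiset.mem_cons_of_mem hΔ))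

/-- `n_{α̃} ≥ L_α` and `n_α ≥ L_{α̃}`. -/
theorem stmt4 (α : Multisegment) (hα : IsMultisegment α) :
    Lmax α ≤ (nSeg (dual α) : ℤ) ∧ Lmax (dual α) ≤ (nSeg α : ℤ) := by
  constructor
  · have hms : ∀ Δ ∈ α.toList, Δ.1 ≤ Δ.2 := fun Δ h => hα Δ (Multiset.mem_toList.mp h)
    have key := lenA (totalSize α.toList) α.toList hms le_rfl
    have hns : (nSeg (dual α) : ℤ)
        = ((mwAux (totalSize α.toList) α.toList).length : ℤ) := by
      simp [nSeg, dual]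
    rw [hns]
    exact lmax_le α (Int.ofNat_nonneg _)
      (fun Δ hΔ => key Δ (Multiset.mem_toList.mpr hΔ))
  · have key := lenB (totalSize α.toList) α.toList
    have hn : (nSeg α : ℤ) = (α.toList.length : ℤ) := by simp [nSeg]
    rw [hn]
    refine lmax_le (dual α) (Int.ofNat_nonneg _) (fun Δ hΔ => ?_)
    have hΔ' : Δ ∈ mwAux (totalSize α.toList) α.toList := by
      simpa [dual] using hΔ
    exact key Δ hΔ'
end

section
/- If α and β are ladder multisegments with α ≤ β and n_α = n_β (equal numbers of segments), then α = β. -/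
section Aux

private lemma maxmin_cons (a b : ℤ) (s : Multiset ℤ) :
    (max a b) ::ₘ (min a b) ::ₘ s = a ::ₘ b ::ₘ s := by
  rcases le_total a b with h | h
  · rw [max_eq_right h, min_eq_left h, Multiset.cons_swap]
  · rw [max_eq_left h, min_eq_right h]

private lemma move_card {γ δ : Multisegment} (h : MoveStep γ δ) :
    Multiset.card δ ≤ Multiset.card γ := by
  cases h <;> simp

private lemma move_maps {γ δ : Multisegment} (h : MoveStep γ δ)
    (hc : Multiset.card δ = Multiset.card γ) :
    δ.map Prod.fst = γ.map Prod.fst ∧ δ.map Prod.snd = γ.map Prod.snd := by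
  cases h with
  | unionInter α Δ₁ Δ₂ hmeet hne =>
    constructor
    · simp only [Multiset.map_cons]
      exact maxmin_cons _ _ _
    · simp only [Multiset.map_cons]
      rw [Multiset.cons_swap]
      exact maxmin_cons _ _ _
  | conj α Δ₁ Δ₂ h => simp at hc

private lemma mle_maps {γ δ : Multisegment} (h : mle γ δ)
    (hc : Multiset.card δ = Multiset.card γ) :
    δ.map Prod.fst = γ.map Prod.fst ∧ δ.map Prod.snd = γ.map Prod.snd := by
  induction h using Relation.ReflTransGen.head_induction_on with
  | refl => exact ⟨rfl, rfl⟩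
  | head hstep hrest ih =>
    rename_i a c
    have h1 := move_card hstep
    have h2 : Multiset.card δ ≤ Multiset.card c :=
      Relation.ReflTransGen.head_induction_on hrest le_rfl
        (fun hs _ h => le_trans h (move_card hs))
    have hcc : Multiset.card c = Multiset.card a := by omega
    have hdc : Multiset.card δ = Multiset.card c := by omega
    obtain ⟨m1, m2⟩ := move_maps hstep hcc
    obtain ⟨m3, m4⟩ := ih hdc
    exact ⟨m3.trans m1, m4.trans m2⟩

private lemma pair_list_eq : ∀ (l₁ l₂ : List Segment),
    l₁.map Prod.fst = l₂.map Prod.fst → l₁.map Prod.snd = l₂.map Prod.snd → l₁ = l₂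
  | [], [], _, _ => rfl
  | [], _ :: _, h, _ => by simp at h
  | _ :: _, [], h, _ => by simp at h
  | a :: l₁, b :: l₂, h1, h2 => by
    simp only [List.map_cons, List.cons.injEq] at h1 h2 ⊢
    exact ⟨Prod.ext h1.1 h2.1, pair_list_eq l₁ l₂ h1.2 h2.2⟩

private lemma ladder_eq_of_maps {α β : Multisegment}
    (hlα : IsLadder α) (hlβ : IsLadder β)
    (h1 : α.map Prod.fst = β.map Prod.fst)
    (h2 : α.map Prod.snd = β.map Prod.snd) : α = β := by
  obtain ⟨l₁, rfl, hc₁⟩ := hlα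
  obtain ⟨l₂, rfl, hc₂⟩ := hlβ
  have p1 : (l₁.map Prod.fst).Perm (l₂.map Prod.fst) := by
    rw [← Multiset.coe_eq_coe, ← Multiset.map_coe, ← Multiset.map_coe]; exact h1
  have p2 : (l₁.map Prod.snd).Perm (l₂.map Prod.snd) := by
    rw [← Multiset.coe_eq_coe, ← Multiset.map_coe, ← Multiset.map_coe]; exact h2
  have s1 : ∀ (l : List Segment), l.Chain' (fun Δ₁ Δ₂ => Δ₁.1 < Δ₂.1 ∧ Δ₁.2 < Δ₂.2) →
      (l.map Prod.fst).Pairwise (· < ·) ∧ (l.map Prod.snd).Pairwise (· < ·) := by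
    intro l hl
    constructor
    · rw [← List.isChain_iff_pairwise, List.isChain_map]
      exact hl.imp (fun a b h => h.1)
    · rw [← List.isChain_iff_pairwise, List.isChain_map]
      exact hl.imp (fun a b h => h.2)
  obtain ⟨sa1, sa2⟩ := s1 l₁ hc₁
  obtain ⟨sb1, sb2⟩ := s1 l₂ hc₂
  have e1 : l₁.map Prod.fst = l₂.map Prod.fst := List.Perm.eq_of_pairwise (fun _ _ _ _ h h' => absurd (h.trans h') (lt_irrefl _)) sa1 sb1 p1
  have e2 : l₁.map Prod.snd = l₂.map Prod.snd := List.Perm.eq_of_pairwise (fun _ _ _ _ h h' => absurd (h.trans h') (lt_irrefl _)) sa2 sb2 p2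
  rw [pair_list_eq l₁ l₂ e1 e2]

end Aux

/-- two comparable ladder multisegments with equally many segments
are equal. -/
theorem stmt11 (α β : Multisegment) (hα : IsMultisegment α)
    (hlα : IsLadder α) (hlβ : IsLadder β) (h : mle α β) (hn : nSeg α = nSeg β) :
    α = β := by
  obtain ⟨m1, m2⟩ := mle_maps h hn.symm
  exact (ladder_eq_of_maps hlβ hlα m1 m2).symm
end
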